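/- Suppose f : [0,1]² → ℝ is continuous with f(x,y) > 0 for all (x,y), and λ : [0,1] → ℝ is nonnegative and integrable. If there exists ρ* ∈ (0,1) such that ρ̄ⁿ ≤ ρ* for every n ∈ ℕ, then there exists n ∈ ℕ with ρⁿ < 1. -/

import Mathlib

open MeasureTheory Set Finset

/-- Integral of the arrival rate function over the `h`-th dyadic subinterval of
`[0,1]` at level `n`: `λ^{(n)}_h = ∫_{h/2ⁿ}^{(h+1)/2ⁿ} λ(x) dx`. -/
noncomputable def lamDyadic (lam : ℝ → ℝ) (n : ℕ) (h : Fin (2 ^ n)) : ℝ :=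
  ∫ x in (((h : ℕ) : ℝ) / 2 ^ n)..((((h : ℕ) : ℝ) + 1) / 2 ^ n), lam x

/-- Minimum of `f` on the dyadic square, realized as the `sInf` of the image. -/
noncomputable def muStarDyadic (f : ℝ × ℝ → ℝ) (n : ℕ) (h m : Fin (2 ^ n)) : ℝ :=
  sInf (f '' (Icc (((h : ℕ) : ℝ) / 2 ^ n) ((((h : ℕ) : ℝ) + 1) / 2 ^ n) ×ˢ
              Icc (((m : ℕ) : ℝ) / 2 ^ n) ((((m : ℕ) : ℝ) + 1) / 2 ^ n)))

/-- Maximum of `f` on the dyadic square, realized as the `sSup` of the image. -/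
noncomputable def muHatDyadic (f : ℝ × ℝ → ℝ) (n : ℕ) (h m : Fin (2 ^ n)) : ℝ :=
  sSup (f '' (Icc (((h : ℕ) : ℝ) / 2 ^ n) ((((h : ℕ) : ℝ) + 1) / 2 ^ n) ×ˢ
              Icc (((m : ℕ) : ℝ) / 2 ^ n) ((((m : ℕ) : ℝ) + 1) / 2 ^ n)))

/-- A matrix with entries in `[0,1]` and unit row sums. -/
def IsStochastic {H M : ℕ} (p : Fin H → Fin M → ℝ) : Prop :=
  (∀ h m, 0 ≤ p h m ∧ p h m ≤ 1) ∧ ∀ h, ∑ m, p h m = 1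

/-- `ρⁿ`: infimum over `2ⁿ×2ⁿ` stochastic matrices of the worst-case load with
minimal service rates. -/
noncomputable def rhoStar (f : ℝ × ℝ → ℝ) (lam : ℝ → ℝ) (n : ℕ) : ℝ :=
  sInf { r : ℝ | ∃ p : Fin (2 ^ n) → Fin (2 ^ n) → ℝ, IsStochastic p ∧
    r = ⨆ m : Fin (2 ^ n), ∑ h : Fin (2 ^ n),
      (2 ^ n : ℝ) * lamDyadic lam n h * p h m / muStarDyadic f n h m }

/-- `ρ̄ⁿ`: infimum over `2ⁿ×2ⁿ` stochastic matrices of the worst-case load with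
maximal service rates. -/
noncomputable def rhoBar (f : ℝ × ℝ → ℝ) (lam : ℝ → ℝ) (n : ℕ) : ℝ :=
  sInf { r : ℝ | ∃ p : Fin (2 ^ n) → Fin (2 ^ n) → ℝ, IsStochastic p ∧
    r = ⨆ m : Fin (2 ^ n), ∑ h : Fin (2 ^ n),
      (2 ^ n : ℝ) * lamDyadic lam n h * p h m / muHatDyadic f n h m }


section Aux

lemma dyadic_sub (n : ℕ) (h : Fin (2^n)) :
    Icc (((h:ℕ):ℝ)/2^n) ((((h:ℕ):ℝ)+1)/2^n) ⊆ Icc (0:ℝ) 1 := by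
  apply Set.Icc_subset_Icc
  · positivity
  · rw [div_le_one (by positivity)]
    exact_mod_cast Nat.succ_le_of_lt h.isLt

lemma dyadic_le (n : ℕ) (h : Fin (2^n)) :
    (((h:ℕ):ℝ)/2^n) ≤ ((((h:ℕ):ℝ)+1)/2^n) := by gcongr; linarith

lemma lamDyadic_nonneg (lam : ℝ → ℝ) (hlam : ∀ x ∈ Icc (0:ℝ) 1, 0 ≤ lam x)
    (n : ℕ) (h : Fin (2^n)) : 0 ≤ lamDyadic lam n h := by
  apply intervalIntegral.integral_nonneg (dyadic_le n h)
  intro x hx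
  exact hlam x (dyadic_sub n h hx)

end Aux

/-- Proposition C.1 (i), deterministic content: if for some
`ρ* ∈ (0,1)` every best-case dyadic load satisfies `ρ̄ⁿ ≤ ρ*`, then `ρⁿ < 1`
for some `n`. -/
theorem stmt15 (f : ℝ × ℝ → ℝ)
    (hf : ContinuousOn f (Icc (0:ℝ) 1 ×ˢ Icc (0:ℝ) 1))
    (hfpos : ∀ z ∈ Icc (0:ℝ) 1 ×ˢ Icc (0:ℝ) 1, 0 < f z)
    (lam : ℝ → ℝ) (hlam : ∀ x ∈ Icc (0:ℝ) 1, 0 ≤ lam x)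
    (hint : IntegrableOn lam (Icc 0 1))
    (rstar : ℝ) (h0 : 0 < rstar) (h1 : rstar < 1)
    (hbar : ∀ n : ℕ, rhoBar f lam n ≤ rstar) :
    ∃ n : ℕ, rhoStar f lam n < 1 := by
  classical
  -- compact unit square
  set Q : Set (ℝ × ℝ) := Icc (0:ℝ) 1 ×ˢ Icc (0:ℝ) 1 with hQ
  have hQc : IsCompact Q := isCompact_Icc.prod isCompact_Icc
  have hQne : Q.Nonempty := (Set.nonempty_Icc.2 zero_le_one).prod (Set.nonempty_Icc.2 zero_le_one)
  obtain ⟨z0, hz0Q, hz0min⟩ := hQc.exists_isMinOn hQne hf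
  set δ : ℝ := f z0 with hδ
  have hδpos : 0 < δ := hfpos z0 hz0Q
  have hδle : ∀ z ∈ Q, δ ≤ f z := fun z hz => hz0min hz
  -- constants
  set K : ℝ := (3 - rstar)/2 with hK
  set t : ℝ := (1 + rstar)/2 with ht
  have hK1 : 1 < K := by rw [hK]; linarith
  have hKt : K * t < 1 := by rw [hK, ht]; nlinarith [sq_nonneg (1 - rstar)]
  set η : ℝ := δ * (1 - rstar) / 2 with hη
  have hηpos : 0 < η := by
    rw [hη]; exact div_pos (mul_pos hδpos (by linarith)) (by norm_num)
  -- uniform continuity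
  have hUC := hQc.uniformContinuousOn_of_continuous hf
  rw [Metric.uniformContinuousOn_iff] at hUC
  obtain ⟨ε, hεpos, hε⟩ := hUC η hηpos
  obtain ⟨n, hn⟩ := exists_pow_lt_of_lt_one hεpos (by norm_num : (1:ℝ)/2 < 1)
  have h2n : ((1:ℝ)/2)^n = 1/2^n := by rw [div_pow, one_pow]
  have hside : (1:ℝ)/2^n < ε := by rw [← h2n]; exact hn
  refine ⟨n, ?_⟩
  have hpow : (0:ℝ) < 2^n := by positivity
  haveI : Nonempty (Fin (2^n)) := ⟨⟨0, by positivity⟩⟩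
  -- facts about each dyadic square
  have key : ∀ h m : Fin (2^n), 0 < muStarDyadic f n h m ∧
      muStarDyadic f n h m ≤ muHatDyadic f n h m ∧
      muHatDyadic f n h m ≤ K * muStarDyadic f n h m := by
    intro h m
    set s : Set (ℝ × ℝ) := Icc (((h:ℕ):ℝ)/2^n) ((((h:ℕ):ℝ)+1)/2^n) ×ˢ
        Icc (((m:ℕ):ℝ)/2^n) ((((m:ℕ):ℝ)+1)/2^n) with hs
    have hsQ : s ⊆ Q := Set.prod_mono (dyadic_sub n h) (dyadic_sub n m)
    have hsc : IsCompact s := isCompact_Icc.prod isCompact_Icc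
    have hsne : s.Nonempty :=
      (Set.nonempty_Icc.2 (dyadic_le n h)).prod (Set.nonempty_Icc.2 (dyadic_le n m))
    have himg : IsCompact (f '' s) := hsc.image_of_continuousOn (hf.mono hsQ)
    have himgne : (f '' s).Nonempty := hsne.image f
    have hmuS : muStarDyadic f n h m = sInf (f '' s) := rfl
    have hmuH : muHatDyadic f n h m = sSup (f '' s) := rfl
    obtain ⟨zi, hzi, hzif⟩ := himg.sInf_mem himgne
    obtain ⟨za, hza, hzaf⟩ := himg.sSup_mem himgne
    have hμSδ : δ ≤ muStarDyadic f n h m := by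
      rw [hmuS, ← hzif]; exact hδle zi (hsQ hzi)
    have hμSpos : 0 < muStarDyadic f n h m := lt_of_lt_of_le hδpos hμSδ
    have hle : muStarDyadic f n h m ≤ muHatDyadic f n h m := by
      rw [hmuS, hmuH]
      exact csInf_le_csSup himgne himg.bddBelow himg.bddAbove
    refine ⟨hμSpos, hle, ?_⟩
    -- distance between the two witnesses
    have hdist : dist za zi < ε := by
      have h1 : dist za.1 zi.1 ≤ 1/2^n := by
        have := Real.dist_le_of_mem_Icc hza.1 hzi.1
        calc dist za.1 zi.1 ≤ (((h:ℕ):ℝ)+1)/2^n - ((h:ℕ):ℝ)/2^n := this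
          _ = 1/2^n := by ring
      have h2 : dist za.2 zi.2 ≤ 1/2^n := by
        have := Real.dist_le_of_mem_Icc hza.2 hzi.2
        calc dist za.2 zi.2 ≤ (((m:ℕ):ℝ)+1)/2^n - ((m:ℕ):ℝ)/2^n := this
          _ = 1/2^n := by ring
      calc dist za zi = max (dist za.1 zi.1) (dist za.2 zi.2) := Prod.dist_eq
        _ ≤ 1/2^n := max_le h1 h2
        _ < ε := hside
    have hosc : muHatDyadic f n h m - muStarDyadic f n h m < η := by
      have := hε za (hsQ hza) zi (hsQ hzi) hdist
      rw [Real.dist_eq] at this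
      rw [hmuH, hmuS, ← hzaf, ← hzif]
      calc f za - f zi ≤ |f za - f zi| := le_abs_self _
        _ < η := this
    nlinarith [hμSδ]
  -- the sets defining rhoStar and rhoBar
  set SB : Set ℝ := { r : ℝ | ∃ p : Fin (2 ^ n) → Fin (2 ^ n) → ℝ, IsStochastic p ∧
    r = ⨆ m : Fin (2 ^ n), ∑ h : Fin (2 ^ n),
      (2 ^ n : ℝ) * lamDyadic lam n h * p h m / muHatDyadic f n h m } with hSB
  set SS : Set ℝ := { r : ℝ | ∃ p : Fin (2 ^ n) → Fin (2 ^ n) → ℝ, IsStochastic p ∧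
    r = ⨆ m : Fin (2 ^ n), ∑ h : Fin (2 ^ n),
      (2 ^ n : ℝ) * lamDyadic lam n h * p h m / muStarDyadic f n h m } with hSS
  have hrhoS : rhoStar f lam n = sInf SS := rfl
  have hrhoB : rhoBar f lam n = sInf SB := rfl
  -- uniform matrix is stochastic
  have hunif : IsStochastic (fun (_ _ : Fin (2^n)) => ((2:ℝ)^n)⁻¹) := by
    constructor
    · intro h m
      constructor
      · positivity
      · rw [inv_le_one_iff₀]; right; exact one_le_pow₀ (by norm_num)
    · intro h
      simp [Finset.sum_const, Finset.card_univ, nsmul_eq_mul]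
  have hSBne : SB.Nonempty := ⟨_, _, hunif, rfl⟩
  -- nonnegativity of terms
  have hterm : ∀ (p : Fin (2^n) → Fin (2^n) → ℝ), IsStochastic p → ∀ h m,
      0 ≤ (2 ^ n : ℝ) * lamDyadic lam n h * p h m / muHatDyadic f n h m := by
    intro p hp h m
    have hH : 0 < muHatDyadic f n h m := lt_of_lt_of_le (key h m).1 (key h m).2.1
    exact div_nonneg (mul_nonneg (mul_nonneg (by positivity)
      (lamDyadic_nonneg lam hlam n h)) (hp.1 h m).1) hH.le
  have htermS : ∀ (p : Fin (2^n) → Fin (2^n) → ℝ), IsStochastic p → ∀ h m,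
      0 ≤ (2 ^ n : ℝ) * lamDyadic lam n h * p h m / muStarDyadic f n h m := by
    intro p hp h m
    exact div_nonneg (mul_nonneg (mul_nonneg (by positivity)
      (lamDyadic_nonneg lam hlam n h)) (hp.1 h m).1) (key h m).1.le
  have hSBbdd : BddBelow SB := by
    refine ⟨0, fun r hr => ?_⟩
    obtain ⟨p, hp, rfl⟩ := hr
    refine le_trans ?_ (le_ciSup (Finite.bddAbove_range _) (Classical.arbitrary (Fin (2^n))))
    exact Finset.sum_nonneg fun h _ => hterm p hp h _
  have hSSbdd : BddBelow SS := by
    refine ⟨0, fun r hr => ?_⟩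
    obtain ⟨p, hp, rfl⟩ := hr
    refine le_trans ?_ (le_ciSup (Finite.bddAbove_range _) (Classical.arbitrary (Fin (2^n))))
    exact Finset.sum_nonneg fun h _ => htermS p hp h _
  -- pick a near-optimal matrix for rhoBar
  have hlt : sInf SB < t := lt_of_le_of_lt (hbar n) (by rw [ht]; linarith)
  obtain ⟨rb, hrbSB, hrbt⟩ := (csInf_lt_iff hSBbdd hSBne).mp hlt
  obtain ⟨p, hp, hrb⟩ := hrbSB
  -- the rhoStar value of the same matrix
  have hmem : (⨆ m : Fin (2 ^ n), ∑ h : Fin (2 ^ n),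
      (2 ^ n : ℝ) * lamDyadic lam n h * p h m / muStarDyadic f n h m) ∈ SS := ⟨p, hp, rfl⟩
  have hb : (⨆ m : Fin (2 ^ n), ∑ h : Fin (2 ^ n),
      (2 ^ n : ℝ) * lamDyadic lam n h * p h m / muStarDyadic f n h m) ≤ K * rb := by
    apply ciSup_le
    intro m
    have hsum : ∑ h : Fin (2 ^ n),
        (2 ^ n : ℝ) * lamDyadic lam n h * p h m / muStarDyadic f n h m ≤
        K * ∑ h : Fin (2 ^ n),
        (2 ^ n : ℝ) * lamDyadic lam n h * p h m / muHatDyadic f n h m := by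
      rw [Finset.mul_sum]
      apply Finset.sum_le_sum
      intro h _
      obtain ⟨hS, hSH, hHK⟩ := key h m
      have hH : 0 < muHatDyadic f n h m := lt_of_lt_of_le hS hSH
      have ha : 0 ≤ (2 ^ n : ℝ) * lamDyadic lam n h * p h m :=
        mul_nonneg (mul_nonneg (by positivity) (lamDyadic_nonneg lam hlam n h)) (hp.1 h m).1
      rw [mul_div_assoc' K, div_le_div_iff₀ hS hH]
      nlinarith [mul_le_mul_of_nonneg_left hHK ha]
    refine le_trans hsum ?_
    have hKpos : (0:ℝ) < K := by linarith
    apply mul_le_mul_of_nonneg_left _ (le_of_lt hKpos)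
    rw [hrb]
    exact le_ciSup (f := fun m' : Fin (2^n) => ∑ h : Fin (2 ^ n),
      (2 ^ n : ℝ) * lamDyadic lam n h * p h m' / muHatDyadic f n h m')
      (Finite.bddAbove_range _) m
  calc rhoStar f lam n ≤ _ := csInf_le hSSbdd hmem
    _ ≤ K * rb := hb
    _ < K * t := by
        apply mul_lt_mul_of_pos_left hrbt; linarith
    _ < 1 := hKt
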